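/- arXiv:1807.04026 — 5 statements merged into one kernel-verified Lean document; each statement's English description precedes it below -/
import Mathlib

section
/- For a continuous linear functional ℓ on R^X (product topology over a topological ring R), ℓ lies in the image of λ_X if and only if the function x ↦ ℓ(δ_x) has finite support; in that case ℓ = λ_X of that function. -/
theorem aux_hasSum {R X : Type*} [CommRing R] [TopologicalSpace R] [IsTopologicalRing R]
    [DecidableEq X] (f : X → R) :
    HasSum (fun x => Pi.single x (f x) : X → X → R) f := by
  rw [Pi.hasSum]
  intro i
  convert hasSum_ite_eq i (f i) using 1
  ext x
  by_cases h : x = i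
  · subst h; simp
  · simp [h, Pi.single_apply, Ne.symm h]

theorem aux_key {R X : Type*} [CommRing R] [TopologicalSpace R] [IsTopologicalRing R] [T2Space R]
    [DecidableEq X] (ℓ : (X → R) →L[R] R) (p : X →₀ R)
    (hp : ∀ x, p x = ℓ (Pi.single x 1)) (f : X → R) :
    ℓ f = p.sum fun x c => c * f x := by
  have h1 : HasSum (fun x => ℓ (Pi.single x (f x))) (ℓ f) := (aux_hasSum f).mapL ℓ
  have h2 : ∀ x, ℓ (Pi.single x (f x)) = p x * f x := by
    intro x
    have : (Pi.single x (f x) : X → R) = f x • (Pi.single x 1 : X → R) := by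
      ext y; by_cases h : y = x <;> simp [h, Pi.single_apply]
    rw [this, map_smul, hp x, smul_eq_mul, mul_comm]
  simp_rw [h2] at h1
  have h3 : HasSum (fun x => p x * f x) (p.sum fun x c => c * f x) := by
    apply hasSum_sum_of_ne_finset_zero (s := p.support)
    intro x hx
    simp [Finsupp.notMem_support_iff.mp hx]
  exact h1.unique h3

/-- A continuous linear functional `ℓ` on `R^X` is in the image of `λ_X` iff
`x ↦ ℓ δ_x` has finite support; and in that case `ℓ = λ_X` of that function. -/
theorem stmt3 (R X : Type*) [CommRing R] [TopologicalSpace R] [IsTopologicalRing R] [T2Space R]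
    [DecidableEq X] (ℓ : (X → R) →L[R] R) :
    ((∃ p : X →₀ R, ∀ f, ℓ f = p.sum fun x c => c * f x) ↔
      {x : X | ℓ (Pi.single x 1) ≠ 0}.Finite) ∧
    (∀ p : X →₀ R, (∀ x, p x = ℓ (Pi.single x 1)) →
      ∀ f, ℓ f = p.sum fun x c => c * f x) := by
  constructor
  · constructor
    · rintro ⟨p, hp⟩
      have key : ∀ x, ℓ (Pi.single x 1) = p x := by
        intro x
        rw [hp (Pi.single x 1), Finsupp.sum, Finset.sum_eq_single x]
        · simp
        · intro b _ hb; simp [Pi.single_apply, hb]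
        · intro h; simp [Finsupp.notMem_support_iff.mp h]
      apply Set.Finite.subset p.finite_support
      intro x hx
      simp only [Set.mem_setOf_eq, key x] at hx
      exact hx
    · intro hfin
      refine ⟨⟨hfin.toFinset, fun x => ℓ (Pi.single x 1), ?_⟩, ?_⟩
      · intro x; simp [Set.Finite.mem_toFinset hfin]
      · exact aux_key ℓ _ (fun x => rfl)
  · intro p hp f
    exact aux_key ℓ p hp f
end

section
/- Every field k with a Hausdorff ring topology is rigid: for every set X, every continuous k-linear functional on k^X (product topology) is of the form f ↦ Σ_x p(x) f(x) for a unique finitely supported p : X →₀ k. -/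
/-- Every field with a Hausdorff ring topology is rigid: every continuous linear
functional on `k^X` is `f ↦ Σ_x p x * f x` for a unique finitely supported `p`. -/
theorem stmt5 (k X : Type*) [Field k] [TopologicalSpace k] [IsTopologicalRing k] [T2Space k]
    (ℓ : (X → k) →L[k] k) :
    ∃! p : X →₀ k, ∀ f, ℓ f = p.sum fun x c => c * f x := by
  have hV : ({(1:k)}ᶜ : Set k) ∈ nhds (0:k) := by
    refine IsOpen.mem_nhds (isOpen_compl_singleton) ?_
    simp
  have hpre : ℓ ⁻¹' ({(1:k)}ᶜ) ∈ nhds (0 : X → k) := by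
    have := ℓ.continuous.continuousAt (x := (0 : X → k))
    rw [ContinuousAt, map_zero] at this
    exact this hV
  rw [nhds_pi, Filter.mem_pi] at hpre
  obtain ⟨I, hIfin, t, ht, hsub⟩ := hpre
  have key : ∀ h : X → k, (∀ x ∈ I, h x = 0) → ℓ h = 0 := by
    intro h h0
    by_contra hc
    have hmem : (ℓ h)⁻¹ • h ∈ I.pi t := by
      intro x hx
      simp [h0 x hx]
      exact mem_of_mem_nhds (ht x)
    have := hsub hmem
    simp [map_smul, inv_mul_cancel₀ hc] at this
  classical
  set S := hIfin.toFinset with hS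
  set p : X →₀ k := ∑ x ∈ S, Finsupp.single x (ℓ (Pi.single x 1)) with hp
  have hps : ∀ f : X → k, p.sum (fun x c => c * f x) = ∑ x ∈ S, ℓ (Pi.single x 1) * f x := by
    intro f
    rw [hp, ← Finsupp.sum_finset_sum_index (by simp) (by intros; ring)]
    refine Finset.sum_congr rfl fun x hx => ?_
    rw [Finsupp.sum_single_index (by simp)]
  have hexist : ∀ f, ℓ f = p.sum fun x c => c * f x := by
    intro f
    set g : X → k := ∑ x ∈ S, f x • (Pi.single x (1:k) : X → k) with hg
    have hdecomp : f = g + (f - g) := by ext y; simp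
    have hvan : ℓ (f - g) = 0 := by
      apply key
      intro x hx
      have hxS : x ∈ S := by simpa [hS] using hx
      simp only [hg, Pi.sub_apply, Finset.sum_apply, Pi.smul_apply, smul_eq_mul]
      rw [Finset.sum_eq_single x]
      · simp
      · intro b _ hbx; simp [Pi.single_apply, hbx.symm]
      · intro hxn; exact absurd hxS hxn
    calc ℓ f = ℓ (g + (f - g)) := by rw [← hdecomp]
    _ = ℓ g := by rw [map_add, hvan, add_zero]
    _ = ∑ x ∈ S, f x * ℓ (Pi.single x 1) := by rw [hg, map_sum]; simp [map_smul]
    _ = ∑ x ∈ S, ℓ (Pi.single x 1) * f x := by simp [mul_comm]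
    _ = p.sum fun x c => c * f x := (hps f).symm
  refine ⟨p, hexist, ?_⟩
  intro q hq
  ext x
  have h1 := hq (Pi.single x (1:k) : X → k)
  have h2 := hexist (Pi.single x (1:k) : X → k)
  have comp : ∀ r : X →₀ k, (r.sum fun z c => c * (Pi.single x (1:k) : X → k) z) = r x := by
    intro r
    rw [Finsupp.sum]
    rw [Finset.sum_eq_single x]
    · simp
    · intro b _ hbx; simp [Pi.single_apply, hbx]
    · intro hxn; simp [Finsupp.notMem_support_iff.mp hxn]
  rw [comp] at h1 h2
  rw [← h1, ← h2]
end

section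
/- Let R be a commutative von Neumann regular topological ring such that 0 is not in the closure of the set of nonzero idempotents of R. Then R is rigid: for every set X, every continuous R-linear functional on R^X (product topology) vanishes on δ_x for all but finitely many x ∈ X. -/
/-- A commutative von Neumann regular topological ring with `0` not in the
closure of the nonzero idempotents is rigid. -/
theorem stmt9 (R : Type*) [CommRing R] [TopologicalSpace R] [IsTopologicalRing R] [T2Space R]
    (dag : R → R) (hdag : ∀ x : R, x = x * dag x * x ∧ dag x = dag x * x * dag x)
    (h0 : (0 : R) ∉ closure {e : R | IsIdempotentElem e ∧ e ≠ 0})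
    (X : Type*) [DecidableEq X] (ℓ : (X → R) →L[R] R) :
    {x : X | ℓ (Pi.single x 1) ≠ 0}.Finite := by
  set V : Set R := (closure {e : R | IsIdempotentElem e ∧ e ≠ 0})ᶜ with hV
  have hVopen : IsOpen V := isClosed_closure.isOpen_compl
  have hV0 : V ∈ nhds (0 : R) := hVopen.mem_nhds h0
  have hcont : ℓ ⁻¹' V ∈ nhds (0 : X → R) := by
    have := ℓ.continuous.continuousAt (x := (0 : X → R))
    rw [ContinuousAt, map_zero] at this
    exact this hV0
  rw [nhds_pi, Filter.mem_pi] at hcont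
  obtain ⟨I, hI, t, ht, hsub⟩ := hcont
  apply Set.Finite.subset hI
  intro x hx
  by_contra hxI
  set a := ℓ (Pi.single x 1) with ha
  have hga : ℓ (Pi.single x (dag a)) = dag a * a := by
    have : Pi.single x (dag a) = dag a • (Pi.single x (1 : R) : X → R) := by
      ext i
      by_cases h : i = x
      · subst h; simp
      · simp [Pi.single_eq_of_ne h]
    rw [this, map_smul, smul_eq_mul, ← ha]
  have hmem : Pi.single x (dag a) ∈ I.pi t := by
    intro i hi
    have hix : i ≠ x := fun h => hxI (h ▸ hi)
    rw [Pi.single_eq_of_ne hix]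
    exact mem_of_mem_nhds (ht i)
  have hℓV : ℓ (Pi.single x (dag a)) ∈ V := hsub hmem
  rw [hga] at hℓV
  apply hℓV
  apply subset_closure
  constructor
  · show dag a * a * (dag a * a) = dag a * a
    calc dag a * a * (dag a * a) = (dag a * a * dag a) * a := by ring
    _ = dag a * a := by rw [← (hdag a).2]
  · intro h
    apply hx
    have h1 := (hdag a).1
    rw [← ha]
    calc a = a * dag a * a := h1
    _ = dag a * a * a := by ring
    _ = 0 := by rw [h, zero_mul]
end

section
/- For any topological ring R and any infinite set X, the topological ring R^X (with product topology) is not rigid: there exists a continuous R^X-linear functional ℓ : (R^X)^X → R^X such that ℓ(δ_x) ≠ 0 for infinitely many x (in fact for all x ∈ X), namely ℓ(f)(x) = f(x)(x). -/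
def evalDiag (R : Type*) [CommRing R] [TopologicalSpace R] [IsTopologicalRing R]
    (X : Type*) : (X → (X → R)) →L[X → R] (X → R) where
  toFun := fun f x => f x x
  map_add' := fun f g => rfl
  map_smul' := fun c f => rfl
  cont := by
    show Continuous fun f : X → X → R => fun x => f x x
    exact continuous_pi fun x => (continuous_apply x).comp (continuous_apply x)

/-- For any (nontrivial) topological ring `R` and any infinite set `X`, the
topological ring `R^X` is not rigid: the continuous `R^X`-linear functional
`ℓ f x = f x x` on `(R^X)^X` has `ℓ δ_x ≠ 0` for all (hence infinitely many) `x`. -/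
theorem stmt10 (R : Type*) [CommRing R] [TopologicalSpace R] [IsTopologicalRing R] [T2Space R]
    [Nontrivial R] (X : Type*) [Infinite X] [DecidableEq X] :
    ∃ ℓ : (X → (X → R)) →L[X → R] (X → R),
      (∀ f x, ℓ f x = f x x) ∧
      {x : X | ℓ (Pi.single x 1) ≠ 0}.Infinite ∧
      ∀ x : X, ℓ (Pi.single x 1) ≠ 0 := by
  have key : ∀ x : X, evalDiag R X (Pi.single x 1) ≠ 0 := by
    intro x h
    have := congrFun h x
    simp [evalDiag, Pi.single_eq_same] at this
  refine ⟨evalDiag R X, fun f x => rfl, ?_, key⟩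
  have h : {x : X | evalDiag R X (Pi.single x 1) ≠ 0} = Set.univ :=
    Set.eq_univ_of_forall key
  rw [h]
  exact Set.infinite_univ
end

section
/- If R is a rigid topological ring and I is a finite set, then the product topological ring R^I is rigid. -/
universe u

/-- A topological ring is rigid when for every set `X`, every continuous linear
functional on `R^X` (product topology) has `x ↦ ℓ δ_x` finitely supported. -/
def IsRigid (R : Type u) [CommRing R] [TopologicalSpace R] : Prop :=
  ∀ (X : Type u) [DecidableEq X] (ℓ : (X → R) →L[R] R),
    {x : X | ℓ (Pi.single x 1) ≠ 0}.Finite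

/-- If `R` is a rigid topological ring and `I` is finite, then `R^I` is rigid. -/
theorem stmt11 {R : Type u} [CommRing R] [TopologicalSpace R] [IsTopologicalRing R] [T2Space R]
    (I : Type u) [Finite I] (h : IsRigid R) : IsRigid (I → R) := by
  intro X _ ℓ
  classical
  have key : ∀ i : I, ∃ ℓi : (X → R) →L[R] R, ∀ f, ℓi f = ℓ (fun x _ => f x) i := by
    intro i
    refine ⟨{ toFun := fun f => ℓ (fun x _ => f x) i
              map_add' := ?_
              map_smul' := ?_
              cont := ?_ }, fun f => rfl⟩
    · intro f g
      exact congrFun (ℓ.map_add (fun x _ => f x) (fun x _ => g x)) i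
    · intro r f
      exact congrFun (ℓ.map_smul (fun _ => r) (fun x _ => f x)) i
    · have h1 : Continuous fun f : X → R => (fun x (_ : I) => f x) := by
        apply continuous_pi; intro x; apply continuous_pi; intro j
        exact continuous_apply x
      exact (continuous_apply i).comp (ℓ.continuous.comp h1)
  choose ℓi hℓi using key
  have hsub : {x : X | ℓ (Pi.single x 1) ≠ 0} ⊆ ⋃ i : I, {x : X | ℓi i (Pi.single x 1) ≠ 0} := by
    intro x hx
    simp only [Set.mem_setOf_eq, ne_eq] at hx
    have : ∃ i : I, ℓ (Pi.single x 1) i ≠ 0 := by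
      by_contra hc
      push_neg at hc
      exact hx (funext hc)
    obtain ⟨i, hi⟩ := this
    refine Set.mem_iUnion.2 ⟨i, ?_⟩
    simp only [Set.mem_setOf_eq, hℓi]
    have heq : (fun x' (_ : I) => (Pi.single x (1:R) : X → R) x') = (Pi.single x (1 : I → R) : X → I → R) := by
      funext x'
      by_cases hxx : x' = x
      · subst hxx; simp; rfl
      · simp [Pi.single_eq_of_ne hxx]; rfl
    rw [heq]
    exact hi
  exact Set.Finite.subset (Set.finite_iUnion fun i => h X (ℓi i)) hsub
end
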